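/- Let m ≥ 2, let a₁ < a₂ < ⋯ < a_m be points of [0,1], let α₁, …, α_m > 0 with Σ_{i=1}^m α_i = 1, and let λ = Σ_{i=1}^m α_i·δ_{a_i}. If p > 1/2, then the iterates V^n λ converge in total variation to δ_{a₁} as n → ∞; if p < 1/2, then V^n λ converge in total variation to δ_{a_m}. -/

import Mathlib

open MeasureTheory Set Filter Topology ENNReal

/-- The unit interval `[0,1]` as a measurable space (with the Borel σ-algebra). -/
abbrev UnitInt : Type := ↥(Set.Icc (0:ℝ) 1)

/-- The family of measures `P(x,y,·)`: `p·δ_x + q·δ_y` if `x < y`, `δ_x` if `x = y`,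
and `p·δ_y + q·δ_x` if `x > y`. -/
noncomputable def Pker (p q : ℝ) (x y : UnitInt) : Measure UnitInt :=
  if x < y then ENNReal.ofReal p • Measure.dirac x + ENNReal.ofReal q • Measure.dirac y
  else if y < x then ENNReal.ofReal p • Measure.dirac y + ENNReal.ofReal q • Measure.dirac x
  else Measure.dirac x

/-- Total variation distance between two measures:
`sup { |μ A − ν A| : A measurable }` (computed in `ℝ≥0∞`). -/
noncomputable def tvDist {X : Type*} [MeasurableSpace X] (μ ν : Measure X) : ℝ≥0∞ :=
  ⨆ (A : Set X) (_ : MeasurableSet A), (μ A - ν A) ⊔ (ν A - μ A)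

/- ### Auxiliary lemmas -/

lemma pker_univ {p q : ℝ} (hp : 0 ≤ p) (hq : 0 ≤ q) (hpq : p + q = 1) (x y : UnitInt) :
    Pker p q x y Set.univ = 1 := by
  have h : ENNReal.ofReal p + ENNReal.ofReal q = 1 := by
    rw [← ENNReal.ofReal_add hp hq, hpq, ENNReal.ofReal_one]
  unfold Pker
  split_ifs <;>
    simp [Measure.add_apply, Measure.smul_apply, smul_eq_mul, h]

lemma dirac_singleton_ne {x b : UnitInt} (h : x ≠ b) : Measure.dirac x {b} = 0 := by
  rw [Measure.dirac_apply]
  simp [Set.indicator_apply, h]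

lemma dirac_singleton_self (x : UnitInt) : Measure.dirac x {x} = 1 := by
  rw [Measure.dirac_apply]
  simp

lemma pker_ne {p q : ℝ} {x y b : UnitInt} (h1 : x ≠ b) (h2 : y ≠ b) :
    Pker p q x y {b} = 0 := by
  unfold Pker
  split_ifs <;>
    simp [Measure.add_apply, Measure.smul_apply, smul_eq_mul,
      dirac_singleton_ne h1, dirac_singleton_ne h2]

lemma pker_self {p q : ℝ} (x : UnitInt) : Pker p q x x {x} = 1 := by
  unfold Pker
  simp [lt_irrefl, dirac_singleton_self]

lemma pker_left_lt {p q : ℝ} {x y : UnitInt} (h : x < y) :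
    Pker p q x y {x} = ENNReal.ofReal p := by
  unfold Pker
  rw [if_pos h]
  simp [Measure.add_apply, Measure.smul_apply, smul_eq_mul, dirac_singleton_self,
    dirac_singleton_ne (ne_of_gt h)]

lemma pker_right_lt {p q : ℝ} {x y : UnitInt} (h : x < y) :
    Pker p q x y {y} = ENNReal.ofReal q := by
  unfold Pker
  rw [if_pos h]
  simp [Measure.add_apply, Measure.smul_apply, smul_eq_mul, dirac_singleton_self,
    dirac_singleton_ne (ne_of_lt h)]

lemma pker_left_gt {p q : ℝ} {x y : UnitInt} (h : x < y) :
    Pker p q y x {x} = ENNReal.ofReal p := by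
  unfold Pker
  rw [if_neg (by exact not_lt_of_gt h), if_pos h]
  simp [Measure.add_apply, Measure.smul_apply, smul_eq_mul, dirac_singleton_self,
    dirac_singleton_ne (ne_of_gt h)]

lemma pker_right_gt {p q : ℝ} {x y : UnitInt} (h : x < y) :
    Pker p q y x {y} = ENNReal.ofReal q := by
  unfold Pker
  rw [if_neg (by exact not_lt_of_gt h), if_pos h]
  simp [Measure.add_apply, Measure.smul_apply, smul_eq_mul, dirac_singleton_self,
    dirac_singleton_ne (ne_of_lt h)]

/-- A measure supported on the finite set `range a` is a combination of Dirac measures. -/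
lemma decomp {m : ℕ} (a : Fin m → UnitInt) (hainj : Function.Injective a)
    (μ : Measure UnitInt)
    (h : μ ((↑(Finset.univ.image a) : Set UnitInt))ᶜ = 0) :
    μ = ∑ i, μ {a i} • Measure.dirac (a i) := by
  classical
  set S : Finset UnitInt := Finset.univ.image a with hSdef
  ext A hA
  have hS : MeasurableSet (↑S : Set UnitInt) := S.measurableSet
  have hd : μ (A \ ↑S) = 0 :=
    measure_mono_null (fun x hx => hx.2) h
  have h2 : μ A = μ (A ∩ ↑S) := by
    have h3 := measure_inter_add_diff (μ := μ) A hS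
    rw [hd, add_zero] at h3
    exact h3.symm
  have hT : A ∩ ↑S = ↑((Finset.univ.filter (fun i => a i ∈ A)).image a) := by
    ext x
    simp only [Set.mem_inter_iff, Finset.coe_image, Set.mem_image, Finset.mem_coe,
      Finset.mem_filter, Finset.mem_univ, true_and, hSdef, Finset.coe_filter]
    aesop
  have hsum : μ (↑((Finset.univ.filter (fun i => a i ∈ A)).image a)) =
      ∑ i ∈ Finset.univ.filter (fun i => a i ∈ A), μ {a i} := by
    rw [show (↑((Finset.univ.filter (fun i => a i ∈ A)).image a) : Set UnitInt) =
        ⋃ i ∈ Finset.univ.filter (fun i => a i ∈ A), {a i} by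
      ext x; simp [Finset.mem_image, eq_comm]]
    rw [measure_biUnion_finset]
    · intro i _ j _ hij
      simp only [Function.onFun, Set.disjoint_singleton]
      exact fun h => hij (hainj h)
    · intro i _; exact measurableSet_singleton _
  rw [h2, hT, hsum]
  rw [Measure.finset_sum_apply]
  rw [Finset.sum_filter]
  apply Finset.sum_congr rfl
  intro i _
  rw [Measure.smul_apply, smul_eq_mul, Measure.dirac_apply]
  by_cases hi : a i ∈ A <;> simp [Set.indicator_apply, hi]

/-- Real recursion convergence. -/
lemma real_tendsto (r : ℝ) (hr : 1/2 < r) (x : ℕ → ℝ)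
    (hx0 : 0 < x 0) (hx01 : x 0 ≤ 1) (hr1 : r ≤ 1)
    (hrec : ∀ n, x (n+1) = x n * x n + 2*r*(x n)*(1 - x n)) :
    Tendsto x atTop (𝓝 1) := by
  have hrpos : (0:ℝ) < r := by linarith
  have hbound : ∀ n, 0 < x n ∧ x n ≤ 1 := by
    intro n
    induction n with
    | zero => exact ⟨hx0, hx01⟩
    | succ n ih =>
      obtain ⟨h1, h2⟩ := ih
      constructor
      · rw [hrec]; nlinarith
      · rw [hrec]
        nlinarith [sq_nonneg (1 - x n),
          mul_nonneg (mul_nonneg (sub_nonneg.2 hr1) h1.le) (sub_nonneg.2 h2)]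
  have hmono : Monotone x := by
    apply monotone_nat_of_le_succ
    intro n
    rw [hrec]
    nlinarith [mul_nonneg (mul_nonneg (hbound n).1.le (sub_nonneg.2 (hbound n).2))
      (by linarith : (0:ℝ) ≤ 2*r - 1)]
  have hbdd : BddAbove (Set.range x) := ⟨1, by rintro _ ⟨n, rfl⟩; exact (hbound n).2⟩
  have hlim := tendsto_atTop_ciSup hmono hbdd
  set L := ⨆ n, x n with hL
  have hL1 : L ≤ 1 := ciSup_le fun n => (hbound n).2
  have hL0 : x 0 ≤ L := le_ciSup hbdd 0
  have hLpos : 0 < L := lt_of_lt_of_le hx0 hL0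
  have h2 : Tendsto (fun n => x (n+1)) atTop (𝓝 L) := hlim.comp (tendsto_add_atTop_nat 1)
  have h3 : Tendsto (fun n => x n * x n + 2*r*(x n)*(1 - x n)) atTop
      (𝓝 (L*L + 2*r*L*(1-L))) :=
    (hlim.mul hlim).add (((tendsto_const_nhds.mul hlim)).mul (tendsto_const_nhds.sub hlim))
  have heq : L = L*L + 2*r*L*(1-L) := by
    apply tendsto_nhds_unique h2
    simpa only [hrec] using h3
  have hLeq : L = 1 := by
    rcases lt_or_eq_of_le hL1 with h | h
    · exfalso
      nlinarith [mul_pos (mul_pos hLpos (sub_pos.2 h)) (by linarith : (0:ℝ) < 2*r - 1)]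
    · exact h
  rwa [hLeq] at hlim

/-- tvDist to a Dirac bound. -/
lemma tvdist_le_dirac (μ : Measure UnitInt) (b : UnitInt) (hμ : μ Set.univ = 1) :
    tvDist μ (Measure.dirac b) ≤ 1 - μ {b} := by
  apply iSup_le
  intro A
  apply iSup_le
  intro hA
  have hAle : μ A ≤ 1 := hμ ▸ measure_mono (Set.subset_univ A)
  have hbA : μ {b} ≠ ∞ := by
    have : μ {b} ≤ 1 := hμ ▸ measure_mono (Set.subset_univ _)
    exact (lt_of_le_of_lt this ENNReal.one_lt_top).ne
  rw [Measure.dirac_apply]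
  by_cases hb : b ∈ A
  · rw [Set.indicator_of_mem hb]
    simp only [Pi.one_apply]
    apply sup_le
    · rw [tsub_eq_zero_of_le hAle]; exact zero_le
    · exact tsub_le_tsub_left (measure_mono (Set.singleton_subset_iff.2 hb)) 1
  · rw [Set.indicator_of_notMem hb]
    apply sup_le
    · have hsub : A ⊆ {b}ᶜ := fun x hx hxb => hb (hxb ▸ hx)
      have : μ A ≤ μ {b}ᶜ := measure_mono hsub
      rw [measure_compl (measurableSet_singleton b) hbA, hμ] at this
      simpa using this
    · simp

/-- Double lintegral of the kernel against a finite combination of Diracs. -/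
lemma Vmu_eq {p q : ℝ} (V : Measure UnitInt → Measure UnitInt)
    (hV : ∀ (μ : Measure UnitInt) (A : Set UnitInt), MeasurableSet A →
      V μ A = ∫⁻ x, ∫⁻ y, Pker p q x y A ∂μ ∂μ)
    {m : ℕ} (a : Fin m → UnitInt) (μ : Measure UnitInt) (c : Fin m → ℝ≥0∞)
    (hdec : μ = ∑ i, c i • Measure.dirac (a i)) (A : Set UnitInt) (hA : MeasurableSet A) :
    V μ A = ∑ i, c i * ∑ j, c j * Pker p q (a i) (a j) A := by
  subst hdec
  rw [hV _ _ hA, lintegral_finset_sum_measure]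
  refine Finset.sum_congr rfl fun i _ => ?_
  rw [lintegral_smul_measure, lintegral_dirac]
  congr 1
  rw [lintegral_finset_sum_measure]
  refine Finset.sum_congr rfl fun j _ => ?_
  rw [lintegral_smul_measure, lintegral_dirac, smul_eq_mul]

/-- The main auxiliary convergence lemma for an "extreme" support point. -/
lemma aux_tendsto (p q r : ℝ) (hp : 0 ≤ p) (hq : 0 ≤ q) (hpq : p + q = 1)
    (V : Measure UnitInt → Measure UnitInt)
    (hV : ∀ (μ : Measure UnitInt) (A : Set UnitInt), MeasurableSet A →
      V μ A = ∫⁻ x, ∫⁻ y, Pker p q x y A ∂μ ∂μ)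
    (m : ℕ) (a : Fin m → UnitInt) (hainj : Function.Injective a)
    (i₀ : Fin m)
    (hr : 1/2 < r) (hr1 : r ≤ 1)
    (hP1 : ∀ j, j ≠ i₀ → Pker p q (a i₀) (a j) {a i₀} = ENNReal.ofReal r)
    (hP2 : ∀ j, j ≠ i₀ → Pker p q (a j) (a i₀) {a i₀} = ENNReal.ofReal r)
    (α : Fin m → ℝ) (hα : ∀ i, 0 < α i) (hsum : ∑ i, α i = 1)
    (lam : Measure UnitInt)
    (hlam : lam = ∑ i, ENNReal.ofReal (α i) • Measure.dirac (a i)) :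
    Tendsto (fun n => tvDist (V^[n] lam) (Measure.dirac (a i₀))) atTop (𝓝 0) := by
  classical
  set S : Finset UnitInt := Finset.univ.image a with hSdef
  have hS : MeasurableSet (↑S : Set UnitInt) := S.measurableSet
  have haS : ∀ i, a i ∈ (↑S : Set UnitInt) := by
    intro i; simp [hSdef]
  -- the recursion map and the real sequence
  set f : ℝ → ℝ := fun t => t * t + 2*r*t*(1 - t) with hf
  set x : ℕ → ℝ := fun n => f^[n] (α i₀) with hx
  have hx0 : x 0 = α i₀ := rfl
  have hxrec : ∀ n, x (n+1) = f (x n) := by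
    intro n; simp [hx, Function.iterate_succ_apply']
  have hx0pos : 0 < x 0 := hx0 ▸ hα i₀
  have hx0le : x 0 ≤ 1 := by
    rw [hx0, ← hsum]
    exact Finset.single_le_sum (fun i _ => (hα i).le) (Finset.mem_univ i₀)
  have hrpos : (0:ℝ) < r := by linarith
  have hbound : ∀ n, 0 < x n ∧ x n ≤ 1 := by
    intro n
    induction n with
    | zero => exact ⟨hx0pos, hx0le⟩
    | succ n ih =>
      obtain ⟨h1, h2⟩ := ih
      rw [hxrec]
      constructor
      · simp only [hf]; nlinarith
      · simp only [hf]
        nlinarith [sq_nonneg (1 - x n),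
          mul_nonneg (mul_nonneg (sub_nonneg.2 hr1) h1.le) (sub_nonneg.2 h2)]
  -- the step lemma
  have step : ∀ (μ : Measure UnitInt) (t : ℝ), 0 ≤ t → t ≤ 1 →
      μ Set.univ = 1 → μ ((↑S : Set UnitInt)ᶜ) = 0 → μ {a i₀} = ENNReal.ofReal t →
      V μ Set.univ = 1 ∧ V μ ((↑S : Set UnitInt)ᶜ) = 0 ∧
        V μ {a i₀} = ENNReal.ofReal (f t) := by
    intro μ t ht0 ht1 h1 h0 hμt
    have hdec : μ = ∑ i, μ {a i} • Measure.dirac (a i) := decomp a hainj μ h0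
    have key : ∀ A : Set UnitInt, MeasurableSet A →
        V μ A = ∑ i, μ {a i} * ∑ j, μ {a j} * Pker p q (a i) (a j) A := by
      intro A hA
      simpa using Vmu_eq V hV a μ (fun i => μ {a i}) (by simpa using hdec) A hA
    have hcsum : ∑ i, μ {a i} = 1 := by
      have h3 := congrArg (fun ν : Measure UnitInt => ν Set.univ) hdec
      simp only [Measure.finset_sum_apply, Measure.smul_apply, smul_eq_mul] at h3
      rw [h1] at h3
      simpa using h3.symm
    have huniv : V μ Set.univ = 1 := by
      rw [key Set.univ MeasurableSet.univ]
      have : ∀ i : Fin m, (∑ j, μ {a j} * Pker p q (a i) (a j) Set.univ) = 1 := by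
        intro i
        calc (∑ j, μ {a j} * Pker p q (a i) (a j) Set.univ)
            = ∑ j, μ {a j} := by
              apply Finset.sum_congr rfl; intro j _
              rw [pker_univ hp hq hpq, mul_one]
          _ = 1 := hcsum
      simp only [this, mul_one]
      exact hcsum
    have hcompl : V μ ((↑S : Set UnitInt)ᶜ) = 0 := by
      rw [key _ hS.compl]
      have hz : ∀ i j : Fin m, Pker p q (a i) (a j) ((↑S : Set UnitInt)ᶜ) = 0 := by
        intro i j
        have hdz : ∀ k : Fin m, Measure.dirac (a k) ((↑S : Set UnitInt)ᶜ) = 0 := by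
          intro k
          rw [Measure.dirac_apply, Set.indicator_of_notMem (by simp [haS k])]
        unfold Pker
        split_ifs <;>
          simp [Measure.add_apply, Measure.smul_apply, smul_eq_mul, hdz]
      simp [hz]
    have hs : ∑ j ∈ ({i₀}ᶜ : Finset (Fin m)), μ {a j} = ENNReal.ofReal (1 - t) := by
      have h4 : μ {a i₀} + ∑ j ∈ ({i₀}ᶜ : Finset (Fin m)), μ {a j} = 1 := by
        rw [← Fintype.sum_eq_add_sum_compl i₀ (fun j => μ {a j})]
        exact hcsum
      rw [hμt] at h4
      have h5 : (∑ j ∈ ({i₀}ᶜ : Finset (Fin m)), μ {a j}) = 1 - ENNReal.ofReal t := by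
        apply ENNReal.eq_sub_of_add_eq ENNReal.ofReal_ne_top
        rw [add_comm]; exact h4
      rw [h5, ENNReal.ofReal_sub 1 ht0, ENNReal.ofReal_one]
    have hsing : V μ {a i₀} = ENNReal.ofReal (f t) := by
      rw [key _ (measurableSet_singleton _)]
      have inner : ∀ i : Fin m, (∑ j, μ {a j} * Pker p q (a i) (a j) {a i₀}) =
          if i = i₀ then ENNReal.ofReal t + ENNReal.ofReal (1-t) * ENNReal.ofReal r
          else ENNReal.ofReal t * ENNReal.ofReal r := by
        intro i
        rw [Fintype.sum_eq_add_sum_compl i₀ (fun j => μ {a j} * Pker p q (a i) (a j) {a i₀})]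
        by_cases hi : i = i₀
        · subst hi
          rw [if_pos rfl, pker_self, mul_one, hμt]
          congr 1
          rw [Finset.sum_congr rfl (fun j hj => by
            rw [hP1 j (by simpa using hj)]), ← Finset.sum_mul, hs]
        · rw [if_neg hi, hP2 i hi, hμt]
          have hz : ∀ j ∈ ({i₀}ᶜ : Finset (Fin m)),
              μ {a j} * Pker p q (a i) (a j) {a i₀} = 0 := by
            intro j hj
            rw [pker_ne (fun h => hi (hainj h))
              (fun h => (by simpa using hj : j ≠ i₀) (hainj h)), mul_zero]
          rw [Finset.sum_congr rfl hz]
          simp [mul_comm]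
      rw [Finset.sum_congr rfl (fun i _ => by rw [inner i])]
      rw [Fintype.sum_eq_add_sum_compl i₀]
      rw [if_pos rfl]
      have hrest : ∑ i ∈ ({i₀}ᶜ : Finset (Fin m)), μ {a i} *
          (if i = i₀ then ENNReal.ofReal t + ENNReal.ofReal (1-t) * ENNReal.ofReal r
          else ENNReal.ofReal t * ENNReal.ofReal r) =
          ENNReal.ofReal (1-t) * (ENNReal.ofReal t * ENNReal.ofReal r) := by
        rw [Finset.sum_congr rfl (fun i hi => by
          rw [if_neg (by simpa using hi)]), ← Finset.sum_mul, hs]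
      rw [hrest, hμt]
      have ht1' : (0:ℝ) ≤ 1 - t := by linarith
      rw [← ENNReal.ofReal_mul ht1', ← ENNReal.ofReal_mul ht0,
        ← ENNReal.ofReal_mul ht1', ← ENNReal.ofReal_add ht0 (by positivity),
        ← ENNReal.ofReal_mul ht0,
        ← ENNReal.ofReal_add
          (mul_nonneg ht0 (by nlinarith [mul_nonneg ht1' hrpos.le]))
          (mul_nonneg ht1' (mul_nonneg ht0 hrpos.le))]
      congr 1
      simp only [hf]
      ring
    exact ⟨huniv, hcompl, hsing⟩
  -- the main induction
  have main : ∀ n, (V^[n] lam) Set.univ = 1 ∧ (V^[n] lam) ((↑S : Set UnitInt)ᶜ) = 0 ∧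
      (V^[n] lam) {a i₀} = ENNReal.ofReal (x n) := by
    intro n
    induction n with
    | zero =>
      simp only [Function.iterate_zero_apply, hlam, hx0]
      refine ⟨?_, ?_, ?_⟩
      · simp only [Measure.finset_sum_apply, Measure.smul_apply, smul_eq_mul]
        have : ∀ i : Fin m, Measure.dirac (a i) (Set.univ : Set UnitInt) = 1 := fun i => by simp
        simp only [this, mul_one]
        rw [← ENNReal.ofReal_sum_of_nonneg (fun i _ => (hα i).le), hsum, ENNReal.ofReal_one]
      · simp only [Measure.finset_sum_apply, Measure.smul_apply, smul_eq_mul]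
        have : ∀ i : Fin m, Measure.dirac (a i) ((↑S : Set UnitInt)ᶜ) = 0 := by
          intro i
          rw [Measure.dirac_apply, Set.indicator_of_notMem (by simp [haS i])]
        simp [this]
      · simp only [Measure.finset_sum_apply, Measure.smul_apply, smul_eq_mul]
        rw [Finset.sum_eq_single i₀]
        · rw [dirac_singleton_self, mul_one]
        · intro j _ hj
          rw [dirac_singleton_ne (fun h => hj (hainj h)), mul_zero]
        · intro h; exact absurd (Finset.mem_univ i₀) h
    | succ n ih =>
      obtain ⟨h1, h0, ht⟩ := ih
      rw [Function.iterate_succ_apply']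
      have := step (V^[n] lam) (x n) (hbound n).1.le (hbound n).2 h1 h0 ht
      rw [← hxrec] at this
      exact this
  -- convergence of the real sequence
  have hxlim : Tendsto x atTop (𝓝 1) :=
    real_tendsto r hr x hx0pos hx0le hr1 (fun n => by rw [hxrec])
  -- squeeze
  have hub : ∀ n, tvDist (V^[n] lam) (Measure.dirac (a i₀)) ≤ ENNReal.ofReal (1 - x n) := by
    intro n
    have h := tvdist_le_dirac (V^[n] lam) (a i₀) (main n).1
    rw [(main n).2.2] at h
    rwa [← ENNReal.ofReal_one, ← ENNReal.ofReal_sub 1 (hbound n).1.le] at h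
  have hto0 : Tendsto (fun n => ENNReal.ofReal (1 - x n)) atTop (𝓝 0) := by
    have h1 : Tendsto (fun n => 1 - x n) atTop (𝓝 0) := by
      have := hxlim.const_sub 1
      simpa using this
    have := ENNReal.tendsto_ofReal h1
    simpa using this
  exact tendsto_of_tendsto_of_tendsto_of_le_of_le tendsto_const_nhds hto0
    (fun n => zero_le) hub

/-- for λ = Σ_{i=1}^m α_i·δ_{a_i} with a₁ < ⋯ < a_m, α_i > 0, Σ α_i = 1 and
m ≥ 2, the iterates V^n λ converge in total variation to δ_{a₁} if p > 1/2 and to δ_{a_m}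
if p < 1/2. -/
theorem iterates_finite_support_tv_limit (p q : ℝ) (hp : 0 ≤ p) (hq : 0 ≤ q) (hpq : p + q = 1)
    (V : Measure UnitInt → Measure UnitInt)
    (hV : ∀ (μ : Measure UnitInt) (A : Set UnitInt), MeasurableSet A →
      V μ A = ∫⁻ x, ∫⁻ y, Pker p q x y A ∂μ ∂μ)
    (m : ℕ) (hm : 2 ≤ m) (a : Fin m → UnitInt) (ha : StrictMono a)
    (α : Fin m → ℝ) (hα : ∀ i, 0 < α i) (hsum : ∑ i, α i = 1)
    (lam : Measure UnitInt)
    (hlam : lam = ∑ i, ENNReal.ofReal (α i) • Measure.dirac (a i)) :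
    (p > 1/2 →
      Tendsto (fun n => tvDist (V^[n] lam) (Measure.dirac (a ⟨0, by omega⟩))) atTop (𝓝 0)) ∧
    (p < 1/2 →
      Tendsto (fun n => tvDist (V^[n] lam) (Measure.dirac (a ⟨m - 1, by omega⟩))) atTop (𝓝 0)) := by
  constructor
  · intro hp2
    apply aux_tendsto p q p hp hq hpq V hV m a ha.injective ⟨0, by omega⟩ hp2
      (by linarith) _ _ α hα hsum lam hlam
    · intro j hj
      have hlt : (⟨0, by omega⟩ : Fin m) < j := by
        rcases Fin.lt_or_lt_of_ne hj with h | h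
        · exact absurd h (by simp [Fin.lt_def])
        · exact h
      exact pker_left_lt (ha hlt)
    · intro j hj
      have hlt : (⟨0, by omega⟩ : Fin m) < j := by
        rcases Fin.lt_or_lt_of_ne hj with h | h
        · exact absurd h (by simp [Fin.lt_def])
        · exact h
      exact pker_left_gt (ha hlt)
  · intro hp2
    have hq2 : 1/2 < q := by linarith
    apply aux_tendsto p q q hp hq hpq V hV m a ha.injective ⟨m - 1, by omega⟩ hq2
      (by linarith) _ _ α hα hsum lam hlam
    · intro j hj
      have hlt : j < (⟨m - 1, by omega⟩ : Fin m) := by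
        rcases Fin.lt_or_lt_of_ne hj with h | h
        · exact h
        · exfalso
          have := h.le
          have hj2 := j.2
          simp [Fin.lt_def] at h
          omega
      exact pker_right_gt (ha hlt)
    · intro j hj
      have hlt : j < (⟨m - 1, by omega⟩ : Fin m) := by
        rcases Fin.lt_or_lt_of_ne hj with h | h
        · exact h
        · exfalso
          have := h.le
          have hj2 := j.2
          simp [Fin.lt_def] at h
          omega
      exact pker_right_lt (ha hlt)
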